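/- Fix x ∈ S^{n−1} and t ≥ 1. For 1 ≤ i ≤ j ≤ n define B_{ij}(x) = ⟨x, A_{ij}(t)x⟩ E_{ij} − (E_{ij}x)(E_{ij}x)ᵀ − t x(E_{ij}x)ᵀ − t(E_{ij}x)xᵀ − t² xxᵀ + t⟨x, A_{ij}(t)x⟩ xxᵀ, where A_{ij}(t) = t·Id + E_{ij}. If C is a symmetric matrix with Cx = 0 and tr(C B_{i₀j₀}(x)) = 0 where ‖C‖_* = tr(C E_{i₀j₀}), then whenever t > 1 + 1/c (with c the equivalence constant satisfying c‖C‖ ≤ ‖C‖_* and ‖E_{ij}‖ ≤ 1), it follows that C = 0. -/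

import Mathlib

open Matrix


lemma trace_mul_vecMulVec {n : ℕ} (C : Matrix (Fin n) (Fin n) ℝ) (u v : Fin n → ℝ) :
    (C * vecMulVec u v).trace = v ⬝ᵥ C.mulVec u := by
  simp only [trace, diag, mul_apply, vecMulVec_apply, dotProduct, mulVec, Finset.mul_sum]
  congr 1; ext i; congr 1; ext j; ring

lemma stmt6_arith (t c s T N : ℝ) (hc : 0 < c) (ht : 1 + 1 / c < t) (hs : -1 ≤ s)
    (hN : 0 ≤ N) (hTc : c * N ≤ T) (hkey : (t + s) * T ≤ N) : N = 0 := by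
  have hts : 1 / c < t + s := by linarith
  have hts0 : 0 < t + s := lt_trans (by positivity) hts
  by_contra h
  have hNpos : 0 < N := lt_of_le_of_ne hN (Ne.symm h)
  have hcN : 0 < c * N := mul_pos hc hNpos
  have h1 : (1 / c) * (c * N) < (t + s) * (c * N) := mul_lt_mul_of_pos_right hts hcN
  have h2 : (t + s) * (c * N) ≤ (t + s) * T := mul_le_mul_of_nonneg_left hTc hts0.le
  have heq : (1 / c) * (c * N) = N := by field_simp
  linarith

/-- `E i j` is the symmetric matrix of the quadratic form `x ↦ x_i x_j − δ_{ij} x_i x_j`. -/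
noncomputable def Esym (n : ℕ) (i j : Fin n) : Matrix (Fin n) (Fin n) ℝ :=
  if i = j then 0 else
    (1 / 2 : ℝ) • (Matrix.single i j 1 + Matrix.single j i 1)

/-- `B_{ij}(x) = ⟨x,A_{ij}(t)x⟩E_{ij} − (E_{ij}x)(E_{ij}x)ᵀ − t·x(E_{ij}x)ᵀ − t·(E_{ij}x)xᵀ
− t²xxᵀ + t⟨x,A_{ij}(t)x⟩xxᵀ`, with `A_{ij}(t) = t·Id + E_{ij}`. -/
noncomputable def Bmat (n : ℕ) (t : ℝ) (i j : Fin n) (x : Fin n → ℝ) :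
    Matrix (Fin n) (Fin n) ℝ :=
  let E := Esym n i j
  let q := x ⬝ᵥ (t • (1 : Matrix (Fin n) (Fin n) ℝ) + E).mulVec x
  q • E - Matrix.vecMulVec (E.mulVec x) (E.mulVec x)
    - t • Matrix.vecMulVec x (E.mulVec x) - t • Matrix.vecMulVec (E.mulVec x) x
    - t ^ 2 • Matrix.vecMulVec x x + (t * q) • Matrix.vecMulVec x x

set_option maxHeartbeats 1000000 in
/-- If `C` is symmetric with `Cx = 0`, `‖C‖_* = tr(C E_{i₀j₀})` is attained at `(i₀,j₀)`,
`c‖C‖ ≤ ‖C‖_*`, `‖E_{ij}‖ ≤ 1`, `t > 1 + 1/c`, and `tr(C B_{i₀j₀}(x)) = 0`, then `C = 0`. -/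
theorem stmt6 (n : ℕ) (x : Fin n → ℝ) (hx : x ⬝ᵥ x = 1) (t c : ℝ) (hc : 0 < c)
    (hE : ∀ i j : Fin n, ‖Matrix.toEuclideanCLM (𝕜 := ℝ) (Esym n i j)‖ ≤ 1)
    (ht : 1 + 1 / c < t)
    (C : Matrix (Fin n) (Fin n) ℝ) (hCsymm : C.IsSymm) (hCx : C.mulVec x = 0)
    (i₀ j₀ : Fin n) (hij : i₀ ≤ j₀)
    (hmax : ∀ i j : Fin n, i ≤ j → |(C * Esym n i j).trace| ≤ (C * Esym n i₀ j₀).trace)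
    (hcC : c * ‖Matrix.toEuclideanCLM (𝕜 := ℝ) C‖ ≤ (C * Esym n i₀ j₀).trace)
    (hB : (C * Bmat n t i₀ j₀ x).trace = 0) :
    C = 0 := by
  set E := Esym n i₀ j₀ with hEdef
  set u := E.mulVec x with hu
  set s := x ⬝ᵥ u with hs
  set T := (C * E).trace with hT
  set N := ‖Matrix.toEuclideanCLM (𝕜 := ℝ) C‖ with hN
  have hN0 : 0 ≤ N := norm_nonneg _
  -- vanishing dot products
  have hxu : x ⬝ᵥ C.mulVec u = 0 := by
    rw [Matrix.dotProduct_mulVec, ← Matrix.mulVec_transpose, hCsymm.eq, hCx, zero_dotProduct]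
  have hux : u ⬝ᵥ C.mulVec x = 0 := by rw [hCx, dotProduct_zero]
  have hxx : x ⬝ᵥ C.mulVec x = 0 := by rw [hCx, dotProduct_zero]
  -- expand hB
  have hq : x ⬝ᵥ (t • (1 : Matrix (Fin n) (Fin n) ℝ) + E).mulVec x = t + s := by
    simp [add_mulVec, smul_mulVec, one_mulVec, dotProduct_add, dotProduct_smul, hx,
      smul_eq_mul]; rfl
  have key : (t + s) * T = u ⬝ᵥ C.mulVec u := by
    have h := hB
    simp only [Bmat, hq] at h
    rw [mul_add, mul_sub, mul_sub, mul_sub, mul_sub, Matrix.mul_smul, Matrix.mul_smul,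
      Matrix.mul_smul, Matrix.mul_smul, Matrix.mul_smul, trace_add, trace_sub, trace_sub,
      trace_sub, trace_sub, trace_smul, trace_smul, trace_smul, trace_smul, trace_smul,
      trace_mul_vecMulVec, trace_mul_vecMulVec, trace_mul_vecMulVec, trace_mul_vecMulVec]
      at h
    rw [← hEdef] at h
    simp only [smul_eq_mul, hxu, hux, hxx, mul_zero, sub_zero, add_zero, ← hT, ← hu] at h
    rw [hq] at h
    linarith
  -- euclidean bridges
  have hEnorm := hE i₀ j₀
  rw [← hEdef] at hEnorm
  set x' : EuclideanSpace ℝ (Fin n) := (WithLp.equiv 2 _).symm x with hx'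
  have hxnorm : ‖x'‖ = 1 := by
    have h2 : ‖x'‖ ^ 2 = x ⬝ᵥ x := by
      rw [← real_inner_self_eq_norm_sq]; simp only [hx', PiLp.inner_apply, dotProduct]; simp [sq]
    nlinarith [norm_nonneg x']
  set u' : EuclideanSpace ℝ (Fin n) := (WithLp.equiv 2 _).symm u with hu'
  have hEu : Matrix.toEuclideanCLM (𝕜 := ℝ) E x' = u' :=
    Matrix.toEuclideanCLM_toLp E x
  have hunorm : ‖u'‖ ≤ 1 := by
    calc ‖u'‖ = ‖Matrix.toEuclideanCLM (𝕜 := ℝ) E x'‖ := by rw [hEu]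
    _ ≤ ‖Matrix.toEuclideanCLM (𝕜 := ℝ) E‖ * ‖x'‖ := ContinuousLinearMap.le_opNorm _ _
    _ ≤ 1 := by rw [hxnorm, mul_one]; exact hEnorm
  have hCu : Matrix.toEuclideanCLM (𝕜 := ℝ) C u' = (WithLp.equiv 2 _).symm (C.mulVec u) :=
    Matrix.toEuclideanCLM_toLp C u
  have huCu : u ⬝ᵥ C.mulVec u ≤ N := by
    have h1 : u ⬝ᵥ C.mulVec u = inner ℝ u' (Matrix.toEuclideanCLM (𝕜 := ℝ) C u') := by
      rw [hCu]; simp [hu', PiLp.inner_apply, dotProduct, mul_comm]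
    have h2 : ‖Matrix.toEuclideanCLM (𝕜 := ℝ) C u'‖ ≤ N * ‖u'‖ :=
      ContinuousLinearMap.le_opNorm _ _
    have h3 : inner ℝ u' (Matrix.toEuclideanCLM (𝕜 := ℝ) C u') ≤
        ‖u'‖ * ‖Matrix.toEuclideanCLM (𝕜 := ℝ) C u'‖ := real_inner_le_norm _ _
    have h4 : 0 ≤ ‖u'‖ := norm_nonneg _
    nlinarith [norm_nonneg (Matrix.toEuclideanCLM (𝕜 := ℝ) C u')]
  have hsabs : -1 ≤ s := by
    have h1 : s = inner ℝ x' u' := by simp [hs, hx', hu', PiLp.inner_apply, dotProduct, mul_comm]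
    have h2 : |(inner ℝ x' u' : ℝ)| ≤ ‖x'‖ * ‖u'‖ := abs_real_inner_le_norm _ _
    rw [hxnorm, one_mul] at h2
    have := (abs_le.mp h2).1
    rw [h1]; linarith
  have hfinal : N = 0 := stmt6_arith t c s T N hc ht hsabs hN0 hcC (by rw [key]; exact huCu)
  rw [hN, norm_eq_zero] at hfinal
  have h := congrArg (Matrix.toEuclideanCLM (𝕜 := ℝ) (n := Fin n)).symm hfinal
  simpa using h
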